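/- Let r ≥ 1 and 0 < α < 1 be reals with r·α < 1. Suppose for each n we are given non-negative reals A_{n,0}, …, A_{n,n} with A_{n,0} ≥ 1 and A_{n,k} ≤ c_n · r^{min(k, n−k)} for all 0 ≤ k ≤ n, where c_n ≥ 1 and (1/n) log c_n → 0 as n → ∞. Then (1/n) · log( ∑_{k=0}^n A_{n,k} α^k ) → 0 as n → ∞. -/

import Mathlib

open Filter

lemma geom_sum_le_aux {x : ℝ} (hx0 : 0 ≤ x) (hx1 : x < 1) (m : ℕ) :
    ∑ i ∈ Finset.range m, x ^ i ≤ (1 - x)⁻¹ := by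
  have hne : x ≠ 1 := ne_of_lt hx1
  rw [geom_sum_eq hne]
  have h1 : 0 < 1 - x := by linarith
  have key : (x ^ m - 1) / (x - 1) = (1 - x ^ m) * (1 - x)⁻¹ := by
    rw [div_eq_mul_inv, show x - 1 = -(1 - x) by ring, inv_neg]; ring
  rw [key]
  calc (1 - x ^ m) * (1 - x)⁻¹ ≤ 1 * (1 - x)⁻¹ := by
        apply mul_le_mul_of_nonneg_right _ (inv_nonneg.mpr h1.le)
        nlinarith [pow_nonneg hx0 m]
    _ = (1 - x)⁻¹ := one_mul _

/-- Let `r ≥ 1` and `0 < α < 1` with `r·α < 1`.  If `A_{n,0}, …, A_{n,n}` are non-negative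
reals with `A_{n,0} ≥ 1` and `A_{n,k} ≤ c_n · r^{min(k, n−k)}` where `c_n ≥ 1` and
`(1/n) log c_n → 0`, then `(1/n) log(∑_{k=0}^n A_{n,k} α^k) → 0` as `n → ∞`. -/
theorem BEC_free_energy_low_temperature (r α : ℝ) (hr : 1 ≤ r) (hα0 : 0 < α)
    (hα1 : α < 1) (hrα : r * α < 1)
    (A : ℕ → ℕ → ℝ) (c : ℕ → ℝ)
    (hA0 : ∀ n : ℕ, 1 ≤ A n 0)
    (hAnonneg : ∀ n : ℕ, ∀ k ≤ n, 0 ≤ A n k)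
    (hAle : ∀ n : ℕ, ∀ k ≤ n, A n k ≤ c n * r ^ (min k (n - k)))
    (hc : ∀ n : ℕ, 1 ≤ c n)
    (hclim : Tendsto (fun n : ℕ => (1 / (n : ℝ)) * Real.log (c n)) atTop (nhds 0)) :
    Tendsto (fun n : ℕ =>
        (1 / (n : ℝ)) * Real.log (∑ k ∈ Finset.range (n + 1), A n k * α ^ k))
      atTop (nhds 0) := by
  set M : ℝ := (1 - r * α)⁻¹ with hM
  have hrα0 : 0 ≤ r * α := by positivity
  have hM1 : 1 ≤ M := by
    rw [hM, le_inv_comm₀ (by norm_num) (by linarith)]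
    linarith
  have hM0 : 0 < M := by linarith
  set S : ℕ → ℝ := fun n => ∑ k ∈ Finset.range (n + 1), A n k * α ^ k with hS
  have hS1 : ∀ n, 1 ≤ S n := by
    intro n
    have h0 : A n 0 * α ^ 0 ≤ S n := by
      apply Finset.single_le_sum (f := fun k => A n k * α ^ k)
      · intro k hk
        exact mul_nonneg (hAnonneg n k (Nat.lt_succ_iff.mp (Finset.mem_range.mp hk)))
          (pow_nonneg hα0.le k)
      · simp
    simpa using (hA0 n).trans (by simpa using h0)
  have hSle : ∀ n, S n ≤ c n * M := by
    intro n
    calc S n ≤ ∑ k ∈ Finset.range (n + 1), c n * (r * α) ^ k := by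
          apply Finset.sum_le_sum
          intro k hk
          have hkn := Nat.lt_succ_iff.mp (Finset.mem_range.mp hk)
          have h1 : A n k ≤ c n * r ^ k := by
            refine (hAle n k hkn).trans ?_
            have : r ^ (min k (n - k)) ≤ r ^ k :=
              pow_le_pow_right₀ hr (min_le_left _ _)
            nlinarith [(hc n)]
          calc A n k * α ^ k ≤ c n * r ^ k * α ^ k :=
                mul_le_mul_of_nonneg_right h1 (pow_nonneg hα0.le k)
            _ = c n * (r * α) ^ k := by rw [mul_pow]; ring
      _ = c n * ∑ k ∈ Finset.range (n + 1), (r * α) ^ k := by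
          rw [Finset.mul_sum]
      _ ≤ c n * M :=
          mul_le_mul_of_nonneg_left (geom_sum_le_aux hrα0 hrα _) (by linarith [hc n])
  have hlow : ∀ n : ℕ, (0 : ℝ) ≤ (1 / (n : ℝ)) * Real.log (S n) := by
    intro n
    exact mul_nonneg (by positivity) (Real.log_nonneg (hS1 n))
  have hup : ∀ n : ℕ, (1 / (n : ℝ)) * Real.log (S n)
      ≤ (1 / (n : ℝ)) * Real.log (c n) + (1 / (n : ℝ)) * Real.log M := by
    intro n
    have hcn : (0:ℝ) < c n := by linarith [hc n]
    have h := Real.log_le_log (by linarith [hS1 n]) (hSle n)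
    rw [Real.log_mul (ne_of_gt hcn) (ne_of_gt hM0)] at h
    have := mul_le_mul_of_nonneg_left h (by positivity : (0:ℝ) ≤ 1 / (n:ℝ))
    linarith [this]
  have hupper : Tendsto (fun n : ℕ => (1 / (n : ℝ)) * Real.log (c n)
      + (1 / (n : ℝ)) * Real.log M) atTop (nhds 0) := by
    have h2 : Tendsto (fun n : ℕ => (1 / (n : ℝ)) * Real.log M) atTop (nhds 0) := by
      have := tendsto_one_div_atTop_nhds_zero_nat.mul_const (Real.log M)
      simpa using this
    simpa using hclim.add h2
  exact tendsto_of_tendsto_of_tendsto_of_le_of_le tendsto_const_nhds hupper hlow hup
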